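/- arXiv:1212.5788 — 2 statements merged into one kernel-verified Lean document; each statement's English description precedes it below -/
import Mathlib

section
/- Let p be a prime, let R be a commutative ring of characteristic p, and let ∂ = (∂_n)_{n ∈ ℕ} be a multiplicatively iterative HS-derivation on R. Then for every n ∈ ℕ, the p-fold composition ∂_n^{(p)} equals ∂_n. -/
open Finset Function

/-- `D` is a Hasse-Schmidt derivation on `R`. -/
def IsHSDeriv {R : Type*} [CommRing R] (D : ℕ → R → R) : Prop :=
  (∀ n x y, D n (x + y) = D n x + D n y) ∧
  (∀ x, D 0 x = x) ∧
  (∀ n x y, D n (x * y) = ∑ ij ∈ HasAntidiagonal.antidiagonal n, D ij.1 x * D ij.2 y)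

/-- The coefficient `n! / ((n-i)!·(n-j)!·(i+j-n)!)` appearing in the multiplicative
iterativity rule. -/
def gmCoeff (i j n : ℕ) : ℕ :=
  n.factorial / ((n - i).factorial * ((n - j).factorial * (i + j - n).factorial))

/-- `D` is a multiplicatively iterative (`G_m`-) HS-derivation. -/
def IsGmIterative {R : Type*} [CommRing R] (D : ℕ → R → R) : Prop :=
  ∀ i j : ℕ, ∀ x, D j (D i x) = ∑ n ∈ Finset.Icc (max i j) (i + j), gmCoeff i j n • D n x

/-- `gmCoeff` cut off outside its natural range. -/
def gz (i j m : ℕ) : ℕ := if m ∈ Finset.Icc (max i j) (i + j) then gmCoeff i j m else 0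

lemma gz_eq (i j m : ℕ) :
    gz i j m = if m ≤ i + j then m.choose j * j.choose (i + j - m) else 0 := by
  unfold gz
  rcases le_or_gt m (i + j) with h | h
  · rw [if_pos h]
    by_cases h2 : max i j ≤ m
    · rw [if_pos (Finset.mem_Icc.mpr ⟨h2, h⟩)]
      have hi : i ≤ m := le_trans (le_max_left _ _) h2
      have hj : j ≤ m := le_trans (le_max_right _ _) h2
      have hc : i + j - m ≤ j := by omega
      have key : m.factorial = (m.choose j * j.choose (i + j - m)) *
          ((m - i).factorial * ((m - j).factorial * (i + j - m).factorial)) := by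
        have e1 := Nat.choose_mul_factorial_mul_factorial hj
        have e2 := Nat.choose_mul_factorial_mul_factorial hc
        have e3 : j - (i + j - m) = m - i := by omega
        rw [e3] at e2
        calc m.factorial = m.choose j * j.factorial * (m - j).factorial := e1.symm
          _ = m.choose j * (j.choose (i + j - m) * (i + j - m).factorial * (m - i).factorial)
                * (m - j).factorial := by rw [e2]
          _ = _ := by ring
      unfold gmCoeff
      exact Nat.div_eq_of_eq_mul_left (by positivity) key
    · rw [if_neg (by simp only [Finset.mem_Icc]; omega)]
      push_neg at h2
      rcases lt_or_ge m j with hj | hj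
      · rw [Nat.choose_eq_zero_of_lt hj, zero_mul]
      · have hlt : j < i + j - m := by omega
        rw [Nat.choose_eq_zero_of_lt hlt, mul_zero]
  · rw [if_neg (by simp only [Finset.mem_Icc]; omega), if_neg (by omega)]

lemma choose_mul_choose (m n t : ℕ) :
    m.choose (n + t) * (n + t).choose n = m.choose n * (m - n).choose t := by
  rcases le_or_gt (n + t) m with h | h
  · have h1 : n ≤ m := le_trans (Nat.le_add_right n t) h
    apply Nat.eq_of_mul_eq_mul_right
      (show 0 < n.factorial * (t.factorial * (m - n - t).factorial) by positivity)
    have e1 := Nat.choose_mul_factorial_mul_factorial h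
    have e2 := Nat.choose_mul_factorial_mul_factorial (Nat.le_add_right n t)
    have e3 := Nat.choose_mul_factorial_mul_factorial h1
    have e4 := Nat.choose_mul_factorial_mul_factorial (show t ≤ m - n by omega)
    have e5 : n + t - n = t := by omega
    have e6 : m - (n + t) = m - n - t := by omega
    rw [e5] at e2
    rw [e6] at e1
    calc m.choose (n + t) * (n + t).choose n *
          (n.factorial * (t.factorial * (m - n - t).factorial))
        = m.choose (n + t) * ((n + t).choose n * n.factorial * t.factorial)
            * (m - n - t).factorial := by ring
      _ = m.choose (n + t) * (n + t).factorial * (m - n - t).factorial := by rw [e2]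
      _ = m.factorial := e1
      _ = m.choose n * n.factorial * (m - n).factorial := e3.symm
      _ = m.choose n * n.factorial *
            ((m - n).choose t * t.factorial * (m - n - t).factorial) := by rw [e4]
      _ = _ := by ring
  · rw [Nat.choose_eq_zero_of_lt h, zero_mul]
    rcases le_or_gt n m with h2 | h2
    · rw [Nat.choose_eq_zero_of_lt (show m - n < t by omega), mul_zero]
    · rw [Nat.choose_eq_zero_of_lt h2, zero_mul]

lemma transformT (n l m : ℕ) :
    ∑ j ∈ range (l + n + 1), m.choose j * gz l n j = m.choose n * m.choose l := by
  have hsplit : ∀ j ∈ range (l + n + 1),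
      m.choose j * gz l n j = m.choose j * (j.choose n * n.choose (l + n - j)) := by
    intro j hj
    rw [gz_eq, if_pos (by simp only [Finset.mem_range] at hj; omega)]
  rw [Finset.sum_congr rfl hsplit, Finset.range_eq_Ico,
    ← Finset.sum_Ico_consecutive _ (Nat.zero_le n) (by omega : n ≤ l + n + 1)]
  have h1 : ∑ j ∈ Finset.Ico 0 n, m.choose j * (j.choose n * n.choose (l + n - j)) = 0 := by
    apply Finset.sum_eq_zero
    intro j hj
    simp only [Finset.mem_Ico] at hj
    rw [Nat.choose_eq_zero_of_lt hj.2, zero_mul, mul_zero]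
  rw [h1, zero_add, Finset.sum_Ico_eq_sum_range]
  have h2 : l + n + 1 - n = l + 1 := by omega
  rw [h2]
  have h3 : ∀ t ∈ range (l + 1),
      m.choose (n + t) * ((n + t).choose n * n.choose (l + n - (n + t)))
        = m.choose n * ((m - n).choose t * n.choose (l - t)) := by
    intro t _
    have : l + n - (n + t) = l - t := by omega
    rw [this, ← mul_assoc, choose_mul_choose, mul_assoc]
  rw [Finset.sum_congr rfl h3, ← Finset.mul_sum]
  have hv : ∑ t ∈ range (l + 1), (m - n).choose t * n.choose (l - t)
      = (m - n + n).choose l := by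
    rw [Nat.add_choose_eq, Finset.Nat.sum_antidiagonal_eq_sum_range_succ_mk]
  rw [hv]
  rcases le_or_gt n m with h | h
  · rw [Nat.sub_add_cancel h]
  · rw [Nat.choose_eq_zero_of_lt h, zero_mul, zero_mul]

/-- Coefficients of the `k`-fold iterate of `D n` in terms of the `D m`. -/
def cc (n : ℕ) : ℕ → ℕ → ℕ
  | 0, m => if m = 0 then 1 else 0
  | k + 1, m => ∑ l ∈ Finset.range (k * n + 1), cc n k l * gz l n m

lemma cc_support (n : ℕ) : ∀ k m, k * n < m → cc n k m = 0 := by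
  intro k
  induction k with
  | zero =>
    intro m hm
    simp only [cc]
    rw [if_neg (show m ≠ 0 by omega)]
  | succ k ih =>
    intro m hm
    have hmul : (k + 1) * n = k * n + n := Nat.succ_mul k n
    simp only [cc]
    apply Finset.sum_eq_zero
    intro l hl
    simp only [Finset.mem_range] at hl
    rw [gz_eq, if_neg (by omega), mul_zero]

lemma cc_one (n m : ℕ) : cc n 1 m = if m = n then 1 else 0 := by
  have h0 : cc n 0 0 = 1 := by simp [cc]
  show (∑ l ∈ Finset.range (0 * n + 1), cc n 0 l * gz l n m) = _
  rw [show 0 * n + 1 = 1 by omega, Finset.sum_range_one, h0, one_mul, gz_eq]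
  rcases lt_trichotomy m n with h | h | h
  · rw [if_neg h.ne, if_pos (by omega), Nat.choose_eq_zero_of_lt h, zero_mul]
  · subst h
    rw [if_pos rfl, if_pos (by omega)]
    simp
  · rw [if_neg (by omega), if_neg (by omega)]

lemma transform_cc (n : ℕ) : ∀ k m : ℕ,
    ∑ j ∈ range (k * n + 1), m.choose j * cc n k j = (m.choose n) ^ k := by
  intro k
  induction k with
  | zero =>
    intro m
    simp [cc]
  | succ k ih =>
    intro m
    have step : ∑ j ∈ range ((k + 1) * n + 1), m.choose j * cc n (k + 1) j
        = ∑ l ∈ range (k * n + 1), cc n k l *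
            ∑ j ∈ range ((k + 1) * n + 1), m.choose j * gz l n j := by
      simp only [cc, Finset.mul_sum]
      rw [Finset.sum_comm]
      apply Finset.sum_congr rfl
      intro l _
      apply Finset.sum_congr rfl
      intro j _
      ring
    rw [step]
    have inner : ∀ l ∈ range (k * n + 1),
        cc n k l * ∑ j ∈ range ((k + 1) * n + 1), m.choose j * gz l n j
          = m.choose n * (m.choose l * cc n k l) := by
      intro l hl
      simp only [Finset.mem_range] at hl
      have hsub : ∑ j ∈ range ((k + 1) * n + 1), m.choose j * gz l n j
          = ∑ j ∈ range (l + n + 1), m.choose j * gz l n j := by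
        symm
        apply Finset.sum_subset
        · apply Finset.range_subset_range.mpr
          have hmul : (k + 1) * n = k * n + n := Nat.succ_mul k n
          omega
        · intro j _ hj
          simp only [Finset.mem_range] at hj
          rw [gz_eq, if_neg (by omega), mul_zero]
      rw [hsub, transformT]
      ring
    rw [Finset.sum_congr rfl inner, ← Finset.mul_sum, ih, pow_succ]
    ring

lemma rep {R : Type*} [CommRing R] (D : ℕ → R → R) (hD : IsHSDeriv D)
    (hiter : IsGmIterative D) (n : ℕ) :
    ∀ k r, (D n)^[k] r = ∑ m ∈ Finset.range (k * n + 1), cc n k m • D m r := by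
  have Dh : ∀ m, ∃ f : R →+ R, ∀ x, f x = D m x := fun m =>
    ⟨AddMonoidHom.mk' (D m) (fun x y => hD.1 m x y), fun _ => rfl⟩
  intro k
  induction k with
  | zero =>
    intro r
    have h0 : cc n 0 0 = 1 := by simp [cc]
    rw [show 0 * n + 1 = 1 by omega, Finset.sum_range_one, h0, one_smul,
      Function.iterate_zero_apply, hD.2.1 r]
  | succ k ih =>
    intro r
    obtain ⟨f, hf⟩ := Dh n
    rw [Function.iterate_succ_apply', ih r, ← hf, map_sum]
    have h1 : ∀ m ∈ Finset.range (k * n + 1),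
        f (cc n k m • D m r)
          = ∑ l ∈ Finset.range ((k + 1) * n + 1), cc n k m • gz m n l • D l r := by
      intro m hm
      simp only [Finset.mem_range] at hm
      rw [map_nsmul, hf, hiter m n r, ← Finset.smul_sum]
      congr 1
      have h2 : ∑ l ∈ Finset.Icc (max m n) (m + n), gmCoeff m n l • D l r
          = ∑ l ∈ Finset.Icc (max m n) (m + n), gz m n l • D l r := by
        apply Finset.sum_congr rfl
        intro l hl
        unfold gz
        rw [if_pos hl]
      rw [h2]
      apply Finset.sum_subset
      · intro l hl
        simp only [Finset.mem_Icc] at hl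
        simp only [Finset.mem_range]
        have hmul : (k + 1) * n = k * n + n := Nat.succ_mul k n
        omega
      · intro l _ hl
        unfold gz
        rw [if_neg hl, zero_smul]
    rw [Finset.sum_congr rfl h1, Finset.sum_comm]
    apply Finset.sum_congr rfl
    intro l _
    simp only [cc]
    rw [Finset.sum_smul]
    apply Finset.sum_congr rfl
    intro m _
    rw [smul_smul]

/-- For a multiplicatively iterative HS-derivation on a ring of characteristic `p`,
the `p`-fold composition `(D n)^{(p)}` equals `D n` for every `n`. -/
theorem gm_p_fold_eq_self (p : ℕ) (hp : p.Prime)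
    (R : Type*) [CommRing R] [CharP R p]
    (D : ℕ → R → R)
    (hD : IsHSDeriv D)
    (hiter : IsGmIterative D) :
    ∀ n : ℕ, ∀ r : R, (D n)^[p] r = D n r := by
  haveI : Fact p.Prime := ⟨hp⟩
  have hp1 : 1 ≤ p := hp.one_lt.le
  intro n r
  have hnpn : n ≤ p * n := Nat.le_mul_of_pos_left n hp.pos
  -- key congruence of coefficients mod p
  have key : ∀ m : ℕ, ∑ j ∈ range (p * n + 1),
      (m.choose j : ZMod p) * ((cc n p j : ZMod p) - (cc n 1 j : ZMod p)) = 0 := by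
    intro m
    have h1 : ∑ j ∈ range (p * n + 1), (m.choose j : ZMod p) * (cc n p j : ZMod p)
        = ((m.choose n : ZMod p)) ^ p := by
      have := congrArg (Nat.cast : ℕ → ZMod p) (transform_cc n p m)
      push_cast at this
      exact this
    have h2 : ∑ j ∈ range (p * n + 1), (m.choose j : ZMod p) * (cc n 1 j : ZMod p)
        = (m.choose n : ZMod p) := by
      have hn : ∑ j ∈ range (p * n + 1), m.choose j * cc n 1 j
          = ∑ j ∈ range (1 * n + 1), m.choose j * cc n 1 j := by
        symm
        apply Finset.sum_subset
        · apply Finset.range_subset_range.mpr; omega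
        · intro j _ hj
          simp only [Finset.mem_range] at hj
          rw [cc_support n 1 j (by omega), mul_zero]
      have := congrArg (Nat.cast : ℕ → ZMod p) (hn.trans (transform_cc n 1 m))
      push_cast at this
      simpa using this
    have h3 : ∑ j ∈ range (p * n + 1),
        (m.choose j : ZMod p) * ((cc n p j : ZMod p) - (cc n 1 j : ZMod p))
        = (∑ j ∈ range (p * n + 1), (m.choose j : ZMod p) * (cc n p j : ZMod p))
          - ∑ j ∈ range (p * n + 1), (m.choose j : ZMod p) * (cc n 1 j : ZMod p) := by
      rw [← Finset.sum_sub_distrib]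
      apply Finset.sum_congr rfl
      intro j _
      ring
    rw [h3, h1, h2, ZMod.pow_card, sub_self]
  have hzm : ∀ m, (cc n p m : ZMod p) = (cc n 1 m : ZMod p) := by
    intro m
    induction m using Nat.strong_induction_on with
    | _ m ih =>
      rcases le_or_gt m (p * n) with hm | hm
      · have hk := key m
        rw [Finset.sum_eq_single m] at hk
        · simpa [Nat.choose_self, sub_eq_zero] using hk
        · intro j hj hne
          rcases lt_or_gt_of_ne hne with h | h
          · rw [ih j h, sub_self, mul_zero]
          · rw [Nat.choose_eq_zero_of_lt h, Nat.cast_zero, zero_mul]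
        · intro h
          exact absurd (Finset.mem_range.mpr (by omega)) h
      · rw [cc_support n p m hm, cc_support n 1 m (by omega)]
  have hR : ∀ m, (cc n p m : R) = (cc n 1 m : R) := by
    intro m
    exact (CharP.natCast_eq_natCast R p).mpr
      ((ZMod.natCast_eq_natCast_iff _ _ _).mp (hzm m))
  rw [rep D hD hiter n p r]
  have hstep : ∀ m ∈ range (p * n + 1),
      cc n p m • D m r = if m = n then D n r else 0 := by
    intro m _
    rw [nsmul_eq_mul, hR m, cc_one]
    rcases eq_or_ne m n with h | h
    · subst h; rw [if_pos rfl, if_pos rfl, Nat.cast_one, one_mul]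
    · rw [if_neg h, if_neg h, Nat.cast_zero, zero_mul]
  rw [Finset.sum_congr rfl hstep, Finset.sum_ite_eq' _ n (fun _ => D n r),
    if_pos (Finset.mem_range.mpr (by omega))]
end

section
/- Let p be a prime, let R be a commutative ring of characteristic p, let m ≥ 2, and let ∂ = (∂_n)_{0 ≤ n < p^m} be a multiplicatively iterative m-truncated HS-derivation (a G_m[m]-derivation) on R. Let 0 ≤ i ≤ m − 2 and suppose x ∈ R satisfies ∂_1(x) = x and ∂_{p^j}(x) = 0 for all j with 1 ≤ j ≤ i. For any y ∈ R set x' := y^{p^{i+1}}·x − ∂_{p^{i+1}}^{(p−1)}(y^{p^{i+1}}·x). Then ∂_1(x') = x' and ∂_{p^j}(x') = 0 for all j with 1 ≤ j ≤ i + 1. -/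
open Finset Function

/-- `D` is an `m`-truncated HS-derivation on `R` (for the prime `p`):
only the maps `D n` for `n < p ^ m` are relevant. -/
def IsTruncHSDeriv (p m : ℕ) {R : Type*} [CommRing R] (D : ℕ → R → R) : Prop :=
  (∀ n, n < p ^ m → ∀ x y, D n (x + y) = D n x + D n y) ∧
  (∀ x, D 0 x = x) ∧
  (∀ n, n < p ^ m → ∀ x y, D n (x * y) = ∑ ij ∈ Finset.HasAntidiagonal.antidiagonal n, D ij.1 x * D ij.2 y)

/-- `D` is a multiplicatively iterative `m`-truncated HS-derivation
(a `G_m[m]`-derivation). -/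
def IsGmIterativeTrunc (p m : ℕ) {R : Type*} [CommRing R] (D : ℕ → R → R) : Prop :=
  ∀ i j : ℕ, i < p ^ m → j < p ^ m → ∀ x,
    D j (D i x) = ∑ n ∈ Finset.Icc (max i j) (min (i + j) (p ^ m - 1)), gmCoeff i j n • D n x


def gmA : ℕ → ℕ → ℕ
  | 0, 0 => 1
  | 0, _+1 => 0
  | j+1, k => k * (gmA j k + gmA j (k-1))

lemma gmA_succ (j k : ℕ) : gmA (j+1) k = k * (gmA j k + gmA j (k-1)) := rfl

lemma gmA_zero_right {j : ℕ} (hj : 1 ≤ j) : gmA j 0 = 0 := by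
  cases j with
  | zero => omega
  | succ j => simp [gmA_succ]

lemma gmA_eq_zero_of_lt : ∀ j k, j < k → gmA j k = 0 := by
  intro j
  induction j with
  | zero => intro k hk; match k, hk with | k+1, _ => rfl
  | succ j ih =>
    intro k hk
    rw [gmA_succ, ih k (by omega), ih (k-1) (by omega)]
    simp

lemma gmA_one (k : ℕ) : gmA 1 k = if k = 1 then 1 else 0 := by
  match k with
  | 0 => simp [gmA_succ]
  | 1 => simp [gmA_succ, gmA]
  | k+2 => simp [gmA_succ, gmA]

lemma choose_mul_succ (t k : ℕ) :
    t * t.choose k = k * t.choose k + (k+1) * t.choose (k+1) := by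
  rcases le_or_gt k t with h | h
  · have h1 := Nat.choose_succ_right_eq t k
    have h2 : t.choose (k+1) * (k+1) = t.choose k * (t - k) := h1
    have : (k+1) * t.choose (k+1) = (t - k) * t.choose k := by
      rw [mul_comm, h2, mul_comm]
    rw [this]
    have : k + (t - k) = t := by omega
    calc t * t.choose k = (k + (t-k)) * t.choose k := by rw [this]
      _ = k * t.choose k + (t-k) * t.choose k := by ring
  · rw [Nat.choose_eq_zero_of_lt h, Nat.choose_eq_zero_of_lt (by omega)]
    simp

lemma gmA_binom (j t : ℕ) : t ^ j = ∑ k ∈ range (j+1), gmA j k * t.choose k := by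
  induction j with
  | zero => simp [gmA]
  | succ j ih =>
    have step : t ^ (j+1) = ∑ k ∈ range (j+1), gmA j k * (t * t.choose k) := by
      rw [pow_succ, ih, Finset.sum_mul]
      exact Finset.sum_congr rfl fun k _ => by ring
    rw [step]
    have expand : ∀ k ∈ range (j+1), gmA j k * (t * t.choose k)
        = gmA j k * (k * t.choose k) + gmA j k * ((k+1) * t.choose (k+1)) := by
      intro k _
      rw [choose_mul_succ]; ring
    rw [Finset.sum_congr rfl expand, Finset.sum_add_distrib]
    -- first sum: shift
    have first : ∑ k ∈ range (j+1), gmA j k * (k * t.choose k)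
        = ∑ k ∈ range (j+1), gmA j (k+1) * ((k+1) * t.choose (k+1)) := by
      rw [Finset.sum_range_succ'];
      simp only [Nat.mul_zero, Nat.zero_mul, mul_zero, add_zero]
      rw [Finset.sum_range_succ, gmA_eq_zero_of_lt j (j+1) (by omega)]
      simp
    rw [first, ← Finset.sum_add_distrib]
    rw [Finset.sum_range_succ' (fun k => gmA (j+1) k * t.choose k)]
    rw [gmA_zero_right (by omega), Nat.zero_mul, add_zero]
    exact Finset.sum_congr rfl fun k _ => by
      rw [gmA_succ]
      simp only [Nat.add_sub_cancel]
      ring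

lemma gmA_card {p : ℕ} (hp : p.Prime) (k : ℕ) (hk1 : 1 ≤ k) (hk2 : k ≤ p) :
    ((gmA p k : ZMod p)) = if k = 1 then 1 else 0 := by
  haveI : Fact p.Prime := ⟨hp⟩
  have hp1 : 1 ≤ p := hp.one_lt.le
  have key : ∀ t : ℕ, (t : ZMod p) = ∑ l ∈ range (p+1), (gmA p l : ZMod p) * (t.choose l : ZMod p) := by
    intro t
    have := gmA_binom p t
    have h2 : ((t : ZMod p)) ^ p = ∑ l ∈ range (p+1), (gmA p l : ZMod p) * (t.choose l : ZMod p) := by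
      rw [← Nat.cast_pow, this]; push_cast; rfl
    rw [← ZMod.pow_card (t : ZMod p), h2]
  -- case k = p
  rcases eq_or_lt_of_le hk2 with heq | hklt
  · obtain ⟨j, hj⟩ : ∃ j, p = j + 1 := ⟨p - 1, by omega⟩
    have hgm : gmA p p = (j + 1) * (gmA j (j + 1) + gmA j j) := by
      rw [hj, gmA_succ]; simp
    rw [heq, if_neg (by have := hp.one_lt; omega)]
    rw [hgm, Nat.cast_mul,
      show ((j + 1 : ℕ) : ZMod p) = 0 from by rw [← hj]; exact ZMod.natCast_self p, zero_mul]
  -- case k ≤ p - 1 : strong induction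
  · clear hk2
    induction k using Nat.strong_induction_on with
    | _ t IH =>
    have hkey := key t
    have hsub : ∑ l ∈ range (p+1), (gmA p l : ZMod p) * (t.choose l : ZMod p)
        = ∑ l ∈ range (t+1), (gmA p l : ZMod p) * (t.choose l : ZMod p) := by
      symm
      apply Finset.sum_subset
      · intro l hl; simp at hl ⊢; omega
      · intro l hl hnl
        simp only [Finset.mem_range] at hl hnl
        rw [Nat.choose_eq_zero_of_lt (by omega)]
        simp
    rw [hsub, Finset.sum_range_succ, Nat.choose_self] at hkey
    have hrest : ∑ l ∈ range t, (gmA p l : ZMod p) * (t.choose l : ZMod p)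
        = if t = 1 then 0 else (t : ZMod p) := by
      rcases eq_or_lt_of_le hk1 with rfl | ht2
      · simp [gmA_zero_right hp1]
      · rw [if_neg (by omega)]
        rw [Finset.sum_eq_single_of_mem 1 (Finset.mem_range.mpr (by omega))]
        · rw [IH 1 (by omega) le_rfl (by omega), if_pos rfl, Nat.choose_one_right, one_mul]
        · intro l hl hl1
          rcases Nat.eq_zero_or_pos l with rfl | hlpos
          · simp [gmA_zero_right hp1]
          · have hlt := Finset.mem_range.mp hl
            rw [IH l hlt hlpos (by omega), if_neg hl1, zero_mul]
    rw [hrest] at hkey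
    rcases eq_or_ne t 1 with rfl | ht1
    · simpa using hkey.symm
    · rw [if_neg ht1] at hkey ⊢
      rw [Nat.cast_one, mul_one] at hkey
      linear_combination -hkey

lemma gmCoeff_eq' (i j n : ℕ) (hi : i ≤ n) (hj : j ≤ n) (hn : n ≤ i + j) :
    Nat.factorial n / ((n - i).factorial * ((n - j).factorial * (i + j - n).factorial))
      = n.choose j * j.choose (n - i) := by
  have h1 : n.choose j * j.factorial * (n - j).factorial = n.factorial :=
    Nat.choose_mul_factorial_mul_factorial hj
  have h2 : j.choose (n - i) * (n - i).factorial * (j - (n - i)).factorial = j.factorial :=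
    Nat.choose_mul_factorial_mul_factorial (by omega)
  have h3 : j - (n - i) = i + j - n := by omega
  rw [h3] at h2
  apply Nat.div_eq_of_eq_mul_left
  · positivity
  · calc n.factorial = n.choose j * j.factorial * (n - j).factorial := h1.symm
      _ = n.choose j * (j.choose (n - i) * (n - i).factorial * (i + j - n).factorial) * (n - j).factorial := by rw [h2]
      _ = n.choose j * j.choose (n - i) * ((n - i).factorial * ((n - j).factorial * (i + j - n).factorial)) := by ring

lemma choose_mul_pow_mod {p : ℕ} (hp : p.Prime) (s : ℕ) :
    ∀ k : ℕ, (((k * p ^ s).choose (p ^ s) : ZMod p)) = (k : ZMod p) := by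
  have hq : 1 ≤ p ^ s := Nat.one_le_pow _ _ hp.pos
  intro k
  induction k with
  | zero => rw [Nat.zero_mul]; simp [Nat.choose_eq_zero_of_lt hq]
  | succ k ih =>
    have hsplit : (k + 1) * p ^ s = k * p ^ s + p ^ s := by ring
    rw [hsplit, Nat.add_choose_eq]
    push_cast
    rw [Finset.sum_eq_add_of_mem (p ^ s, 0) (0, p ^ s) ?_ ?_ ?_ ?_]
    · rw [Nat.choose_self, Nat.choose_zero_right, Nat.choose_zero_right, ih]
      push_cast; ring
    · simp [Finset.mem_antidiagonal]
    · simp [Finset.mem_antidiagonal]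
    · intro h; rw [Prod.mk.injEq] at h; omega
    · rintro ⟨a, b⟩ hab ⟨hne1, hne2⟩
      rw [Finset.HasAntidiagonal.mem_antidiagonal] at hab
      have hb1 : b ≠ 0 := by rintro rfl; exact hne1 (by rw [Prod.mk.injEq]; omega)
      have hb2 : b ≠ p ^ s := by rintro rfl; exact hne2 (by rw [Prod.mk.injEq]; omega)
      have : (p : ℕ) ∣ (p ^ s).choose b := Nat.Prime.dvd_choose_pow hp hb1 hb2
      have : ((p ^ s).choose b : ZMod p) = 0 := by
        exact_mod_cast (ZMod.natCast_eq_zero_iff _ _).mpr this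
      rw [this, mul_zero]

section HS

variable {p m : ℕ} {R : Type*} [CommRing R] {D : ℕ → R → R}

lemma hs_zero (hD : IsTruncHSDeriv p m D) {n : ℕ} (hn : n < p ^ m) : D n 0 = 0 := by
  have h := hD.1 n hn 0 0
  rw [add_zero] at h
  exact (left_eq_add.mp h)

/-- `D n` as an additive monoid hom. -/
def hsHom (hD : IsTruncHSDeriv p m D) (n : ℕ) (hn : n < p ^ m) : R →+ R :=
  AddMonoidHom.mk' (fun r => D n r) (hD.1 n hn)

lemma hs_one (hD : IsTruncHSDeriv p m D) : ∀ n, n < p ^ m → 0 < n → D n 1 = 0 := by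
  intro n
  induction n using Nat.strong_induction_on with
  | _ n IH =>
  intro hn h0
  have h := hD.2.2 n hn 1 1
  rw [mul_one] at h
  rw [Finset.sum_eq_add_of_mem (0, n) (n, 0) (by simp) (by simp)
    (by intro hc; rw [Prod.mk.injEq] at hc; omega) ?_] at h
  · rw [hD.2.1] at h
    rw [one_mul, mul_one] at h
    exact left_eq_add.mp h
  · rintro ⟨a, b⟩ hab ⟨hne1, hne2⟩
    rw [Finset.HasAntidiagonal.mem_antidiagonal] at hab
    have ha0 : a ≠ 0 := by rintro rfl; exact hne1 (by rw [Prod.mk.injEq]; omega)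
    have hb0 : b ≠ 0 := by rintro rfl; exact hne2 (by rw [Prod.mk.injEq]; omega)
    rw [IH a (by omega) (by omega) (by omega), zero_mul]

noncomputable def hsPoly (D : ℕ → R → R) (N : ℕ) (r : R) : Polynomial R :=
  ∑ n ∈ range N, Polynomial.C (D n r) * Polynomial.X ^ n

lemma hsPoly_coeff (D : ℕ → R → R) (N : ℕ) (r : R) (k : ℕ) :
    (hsPoly D N r).coeff k = if k < N then D k r else 0 := by
  unfold hsPoly
  rw [Polynomial.finset_sum_coeff]
  simp only [Polynomial.coeff_C_mul, Polynomial.coeff_X_pow, mul_ite, mul_one, mul_zero]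
  rw [Finset.sum_ite_eq (range N) k]
  simp [Finset.mem_range]

lemma hsPoly_mul (hD : IsTruncHSDeriv p m D) (a b : R) {k : ℕ} (hk : k < p ^ m) :
    (hsPoly D (p ^ m) a * hsPoly D (p ^ m) b).coeff k = D k (a * b) := by
  rw [Polynomial.coeff_mul, hD.2.2 k hk]
  apply Finset.sum_congr rfl
  rintro ⟨u, v⟩ huv
  rw [Finset.HasAntidiagonal.mem_antidiagonal] at huv
  rw [hsPoly_coeff, hsPoly_coeff, if_pos (by omega), if_pos (by omega)]

lemma hsPoly_pow (hD : IsTruncHSDeriv p m D) (w : R) :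
    ∀ e, 1 ≤ e → ∀ k, k < p ^ m →
      (hsPoly D (p ^ m) (w ^ e)).coeff k = ((hsPoly D (p ^ m) w) ^ e).coeff k := by
  intro e he
  induction e, he using Nat.le_induction with
  | base => intro k hk; rw [pow_one, pow_one]
  | succ e he IH =>
    intro k hk
    have h1 : (hsPoly D (p ^ m) (w ^ (e + 1))).coeff k
        = (hsPoly D (p ^ m) (w ^ e) * hsPoly D (p ^ m) w).coeff k := by
      rw [hsPoly_mul hD _ _ hk, hsPoly_coeff, if_pos hk, pow_succ]
    rw [h1, Polynomial.coeff_mul, pow_succ, Polynomial.coeff_mul]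
    apply Finset.sum_congr rfl
    rintro ⟨u, v⟩ huv
    rw [Finset.HasAntidiagonal.mem_antidiagonal] at huv
    rw [IH u (by omega)]

lemma hs_pow_p_vanish (hp : p.Prime) [CharP R p] (hD : IsTruncHSDeriv p m D)
    (s : ℕ) (hs : p ^ s ≤ p ^ m) (w : R) {a : ℕ} (h0 : 0 < a) (ha : a < p ^ s) :
    D a (w ^ p ^ s) = 0 := by
  haveI : CharP (Polynomial R) p := charP_of_injective_ringHom Polynomial.C_injective p
  haveI : Fact p.Prime := ⟨hp⟩
  haveI : ExpChar (Polynomial R) p := ExpChar.prime hp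
  have hapm : a < p ^ m := lt_of_lt_of_le ha hs
  have h1 : D a (w ^ p ^ s) = ((hsPoly D (p ^ m) w) ^ p ^ s).coeff a := by
    rw [← hsPoly_pow hD w (p ^ s) (Nat.one_le_pow _ _ hp.pos) a hapm, hsPoly_coeff, if_pos hapm]
  rw [h1]
  unfold hsPoly
  rw [sum_pow_char_pow]
  rw [Polynomial.finset_sum_coeff]
  apply Finset.sum_eq_zero
  intro n _
  rw [mul_pow, ← Polynomial.C_pow, ← pow_mul, Polynomial.coeff_C_mul, Polynomial.coeff_X_pow,
    if_neg, mul_zero]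
  intro heq
  rcases Nat.eq_zero_or_pos n with rfl | hn1
  · omega
  · have : p ^ s ≤ n * p ^ s := Nat.le_mul_of_pos_left _ hn1
    omega

end HS

lemma gmCoeff_eq (i j n : ℕ) (hi : i ≤ n) (hj : j ≤ n) (hn : n ≤ i + j) :
    gmCoeff i j n = n.choose j * j.choose (n - i) :=
  gmCoeff_eq' i j n hi hj hn

section Iter

variable {p m : ℕ} {R : Type*} [CommRing R] {D : ℕ → R → R}

lemma cast_eq_of_zmod {a b : ℕ} [CharP R p] (h : (a : ZMod p) = (b : ZMod p)) :
    (a : R) = (b : R) := by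
  rw [ZMod.natCast_eq_natCast_iff] at h
  exact (CharP.natCast_eq_natCast R p).mpr h

lemma hs_comm (hiter : IsGmIterativeTrunc p m D) {a b : ℕ} (ha : a < p ^ m) (hb : b < p ^ m)
    (w : R) : D a (D b w) = D b (D a w) := by
  rw [hiter b a hb ha w, hiter a b ha hb w, max_comm b a, add_comm b a]
  apply Finset.sum_congr rfl
  intro n _
  have h : gmCoeff b a n = gmCoeff a b n := by
    unfold gmCoeff
    rw [show (n - b).factorial * ((n - a).factorial * (b + a - n).factorial)
        = (n - a).factorial * ((n - b).factorial * (a + b - n).factorial) by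
      rw [add_comm b a]; ring]
  rw [h]

variable [CharP R p]

lemma hs_step (hp : p.Prime) (hD : IsTruncHSDeriv p m D) (hiter : IsGmIterativeTrunc p m D)
    {i : ℕ} (hi2 : i + 2 ≤ m) {k : ℕ} (hk1 : 1 ≤ k) (hk2 : k ≤ p - 1) (w : R) :
    D (p ^ (i+1)) (D (k * p ^ (i+1)) w)
      = k • D (k * p ^ (i+1)) w + (k + 1) • D ((k + 1) * p ^ (i+1)) w := by
  have hp2 := hp.two_le
  set q := p ^ (i+1) with hqdef
  have hq1 : 1 ≤ q := Nat.one_le_pow _ _ hp.pos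
  have hqq : q < p ^ (i + 2) := Nat.pow_lt_pow_right hp.one_lt (by omega)
  have hqm : p ^ (i + 2) ≤ p ^ m := Nat.pow_le_pow_right hp.pos hi2
  have hqN : q < p ^ m := lt_of_lt_of_le hqq hqm
  have hdist : (k + 1) * q = k * q + q := by ring
  have hqkq : q ≤ k * q := Nat.le_mul_of_pos_left _ (by omega)
  have hkq2 : (k + 1) * q ≤ p ^ (i + 2) := by
    have h1 : (k + 1) * q ≤ p * q := Nat.mul_le_mul_right _ (by omega)
    have h2 : p * q = p ^ (i + 2) := by rw [hqdef, ← pow_succ']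
    omega
  have hkqN : k * q < p ^ m := by omega
  -- middle terms vanish
  have hmid : ∀ n, k * q < n → n < k * q + q → gmCoeff (k * q) q n • D n w = 0 := by
    intro n h1 h2
    have hco : gmCoeff (k * q) q n = n.choose q * q.choose (n - k * q) := by
      apply gmCoeff_eq <;> omega
    have hdvd : p ∣ gmCoeff (k * q) q n := by
      rw [hco]
      exact Dvd.dvd.mul_left (Nat.Prime.dvd_choose_pow hp (by omega) (by omega)) _
    rw [nsmul_eq_mul, (CharP.cast_eq_zero_iff R p _).mpr hdvd, zero_mul]
  have hiter1 := hiter (k * q) q hkqN hqN w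
  rw [max_eq_left (Nat.le_mul_of_pos_left _ (by omega))] at hiter1
  set M := min (k * q + q) (p ^ m - 1) with hM
  have hkqM : k * q ≤ M := le_min (by omega) (by omega)
  rw [← Finset.add_sum_erase _ _ (Finset.mem_Icc.mpr ⟨le_rfl, hkqM⟩),
    Finset.Icc_erase_left] at hiter1
  -- first coefficient
  have hco1 : (gmCoeff (k * q) q (k * q) : R) = (k : R) := by
    have h1 : gmCoeff (k * q) q (k * q) = (k * q).choose q * q.choose 0 := by
      have := gmCoeff_eq (k * q) q (k * q) le_rfl (Nat.le_mul_of_pos_left _ (by omega)) (by omega)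
      rwa [Nat.sub_self] at this
    rw [h1, Nat.choose_zero_right, mul_one]
    exact cast_eq_of_zmod (choose_mul_pow_mod hp (i+1) k)
  have hterm1 : gmCoeff (k * q) q (k * q) • D (k * q) w = k • D (k * q) w := by
    rw [nsmul_eq_mul, nsmul_eq_mul, hco1]
  by_cases hcase : k * q + q ≤ p ^ m - 1
  · have hM' : M = k * q + q := min_eq_left hcase
    rw [hM'] at hiter1
    rw [← Finset.sum_erase_add _ _ (Finset.mem_Ioc.mpr ⟨by omega, le_rfl⟩),
      Finset.Ioc_erase_right] at hiter1
    rw [Finset.sum_eq_zero (fun n hn => by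
      rw [Finset.mem_Ioo] at hn
      exact hmid n hn.1 hn.2), zero_add] at hiter1
    have hco2 : (gmCoeff (k * q) q (k * q + q) : R) = ((k + 1 : ℕ) : R) := by
      have h1 : gmCoeff (k * q) q (k * q + q) = ((k+1) * q).choose q * q.choose q := by
        have := gmCoeff_eq (k * q) q (k * q + q) (by omega)
          (by omega) (by omega)
        rw [this, Nat.add_sub_cancel_left]
        congr 2
        ring
      rw [h1, Nat.choose_self, mul_one]
      exact cast_eq_of_zmod (choose_mul_pow_mod hp (i+1) (k+1))
    rw [hiter1, hterm1]
    congr 1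
    rw [nsmul_eq_mul, nsmul_eq_mul, hco2]
    congr 2
    ring
  · have hkp : k + 1 = p := by
      by_contra hne
      have h1 : k + 1 ≤ p - 1 := by omega
      have h2 : (k + 1) * q ≤ (p - 1) * q := Nat.mul_le_mul_right _ h1
      have h3 : (p - 1) * q + q = p * q := by
        have hpq : p - 1 + 1 = p := by omega
        calc (p - 1) * q + q = (p - 1 + 1) * q := by ring
          _ = p * q := by rw [hpq]
      have h4 : p * q = p ^ (i + 2) := by rw [hqdef, ← pow_succ']
      omega
    rw [Finset.sum_eq_zero (fun n hn => by
      rw [Finset.mem_Ioc] at hn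
      exact hmid n hn.1 (by omega)), add_zero] at hiter1
    rw [hiter1, hterm1]
    have : (k + 1) • D ((k + 1) * q) w = 0 := by
      rw [nsmul_eq_mul, hkp, CharP.cast_eq_zero, zero_mul]
    rw [this, add_zero]

lemma hs_iterate (hp : p.Prime) (hD : IsTruncHSDeriv p m D) (hiter : IsGmIterativeTrunc p m D)
    {i : ℕ} (hi2 : i + 2 ≤ m) (w : R) :
    ∀ j, 1 ≤ j → j ≤ p →
      (D (p ^ (i+1)))^[j] w = ∑ k ∈ Finset.range (p + 1), gmA j k • D (k * p ^ (i+1)) w := by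
  have hp2 := hp.two_le
  set q := p ^ (i+1) with hqdef
  have hq1 : 1 ≤ q := Nat.one_le_pow _ _ hp.pos
  have hqq : q < p ^ (i + 2) := Nat.pow_lt_pow_right hp.one_lt (by omega)
  have hqm : p ^ (i + 2) ≤ p ^ m := Nat.pow_le_pow_right hp.pos hi2
  have hqN : q < p ^ m := lt_of_lt_of_le hqq hqm
  intro j hj1
  induction j, hj1 using Nat.le_induction with
  | base =>
    intro _
    rw [Function.iterate_one]
    rw [Finset.sum_eq_single_of_mem 1 (Finset.mem_range.mpr (by omega))]
    · rw [gmA_one, if_pos rfl, one_smul, one_mul]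
    · intro k _ hk1
      rw [gmA_one, if_neg hk1, zero_smul]
  | succ j hj IH =>
    intro hj2
    have hIH := IH (by omega)
    rw [Function.iterate_succ_apply', hIH]
    have hmap : D q (∑ k ∈ Finset.range (p + 1), gmA j k • D (k * q) w)
        = ∑ k ∈ Finset.range (p + 1), gmA j k • D q (D (k * q) w) := by
      have := map_sum (hsHom hD q hqN) (fun k => gmA j k • D (k * q) w) (Finset.range (p+1))
      rw [show (hsHom hD q hqN : R → R) = D q from rfl] at this
      rw [this]  -- might not typecheck directly; fix below
      apply Finset.sum_congr rfl
      intro k _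
      exact map_nsmul (hsHom hD q hqN) _ _
    rw [hmap]
    have hstep' : ∀ k ∈ Finset.range (p + 1),
        gmA j k • D q (D (k * q) w)
          = (k * gmA j k) • D (k * q) w + ((k + 1) * gmA j k) • D ((k + 1) * q) w := by
      intro k hk
      rw [Finset.mem_range] at hk
      rcases Nat.eq_zero_or_pos k with rfl | hk1
      · rw [gmA_zero_right (by omega)]
        simp
      · rcases eq_or_lt_of_le (show k ≤ p from by omega) with rfl | hklt
        · rw [gmA_eq_zero_of_lt j k (by omega)]
          simp
        · rw [hs_step hp hD hiter hi2 hk1 (by omega) w, smul_add, smul_smul, smul_smul,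
            mul_comm (gmA j k) k, mul_comm (gmA j k) (k+1)]
    rw [Finset.sum_congr rfl hstep', Finset.sum_add_distrib]
    -- second sum: drop k = p term
    rw [Finset.sum_range_succ (fun k => ((k + 1) * gmA j k) • D ((k + 1) * q) w)]
    rw [gmA_eq_zero_of_lt j p (by omega), Nat.mul_zero, zero_smul, add_zero]
    -- first sum: shift index
    rw [Finset.sum_range_succ' (fun k => (k * gmA j k) • D (k * q) w)]
    rw [Nat.zero_mul, zero_smul, add_zero]
    -- target: shift
    rw [Finset.sum_range_succ' (fun k => gmA (j+1) k • D (k * q) w)]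
    rw [gmA_zero_right (by omega : 1 ≤ j + 1), zero_smul, add_zero]
    rw [← Finset.sum_add_distrib]
    apply Finset.sum_congr rfl
    intro k _
    rw [gmA_succ]
    simp only [Nat.add_sub_cancel]
    rw [← add_smul]
    congr 1
    ring

end Iter

/-- Propagating a multiplicative canonical element one step up: if `D 1 x = x` and
`D (p^j) x = 0` for `1 ≤ j ≤ i`, then
`x' = y^{p^{i+1}}·x − (D (p^{i+1}))^{(p-1)}(y^{p^{i+1}}·x)` satisfies `D 1 x' = x'` and
`D (p^j) x' = 0` for `1 ≤ j ≤ i + 1`. -/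
theorem gm_canonical_step (p : ℕ) (hp : p.Prime) (m : ℕ) (hm : 2 ≤ m)
    (R : Type*) [CommRing R] [CharP R p]
    (D : ℕ → R → R)
    (hD : IsTruncHSDeriv p m D)
    (hiter : IsGmIterativeTrunc p m D)
    (i : ℕ) (hi : i ≤ m - 2)
    (x : R) (hx1 : D 1 x = x) (hxp : ∀ j : ℕ, 1 ≤ j → j ≤ i → D (p ^ j) x = 0)
    (y : R) :
    D 1 (y ^ p ^ (i + 1) * x - (D (p ^ (i + 1)))^[p - 1] (y ^ p ^ (i + 1) * x)) =
        y ^ p ^ (i + 1) * x - (D (p ^ (i + 1)))^[p - 1] (y ^ p ^ (i + 1) * x) ∧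
      ∀ j : ℕ, 1 ≤ j → j ≤ i + 1 →
        D (p ^ j) (y ^ p ^ (i + 1) * x - (D (p ^ (i + 1)))^[p - 1] (y ^ p ^ (i + 1) * x)) = 0 := by
  
  have hp2 := hp.two_le
  have hi2 : i + 2 ≤ m := by omega
  set q := p ^ (i + 1) with hqdef
  have hq1 : 1 ≤ q := Nat.one_le_pow _ _ hp.pos
  have hqp : p ≤ q := by
    calc p = p ^ 1 := (pow_one p).symm
      _ ≤ q := Nat.pow_le_pow_right hp.pos (by omega)
  have hqq : q < p ^ (i + 2) := Nat.pow_lt_pow_right hp.one_lt (by omega)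
  have hqm : p ^ (i + 2) ≤ p ^ m := Nat.pow_le_pow_right hp.pos hi2
  have hqN : q < p ^ m := lt_of_lt_of_le hqq hqm
  have hN1 : 1 < p ^ m := by omega
  set z := y ^ q * x with hzdef
  -- D_1 is a derivation
  have hd1mul : ∀ a b : R, D 1 (a * b) = a * D 1 b + D 1 a * b := by
    intro a b
    have h := hD.2.2 1 hN1 a b
    rw [Finset.sum_eq_add_of_mem (0, 1) (1, 0) (by simp) (by simp)
      (by intro hc; rw [Prod.mk.injEq] at hc; omega) ?_] at h
    · rwa [hD.2.1, hD.2.1] at h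
    · rintro ⟨a', b'⟩ hab ⟨hne1, hne2⟩
      rw [Finset.HasAntidiagonal.mem_antidiagonal] at hab
      exfalso
      rcases Nat.eq_zero_or_pos a' with rfl | ha'
      · exact hne1 (by rw [Prod.mk.injEq]; omega)
      · exact hne2 (by rw [Prod.mk.injEq]; omega)
  -- vanishing of D on y^q below q
  have hDyq : ∀ a, 0 < a → a < q → D a (y ^ q) = 0 := fun a h1 h2 =>
    hs_pow_p_vanish hp hD (i + 1) (Nat.pow_le_pow_right hp.pos (by omega)) y h1 h2
  -- z satisfies the same hypotheses as x
  have hz1 : D 1 z = z := by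
    rw [hzdef, hd1mul, hx1, hDyq 1 one_pos (by omega), zero_mul, add_zero]
  have hzp : ∀ j, 1 ≤ j → j ≤ i → D (p ^ j) z = 0 := by
    intro j hj1 hj2
    have hpj : p ^ j < p ^ m := lt_of_le_of_lt (Nat.pow_le_pow_right hp.pos (by omega)) hqN
    have hpjq : p ^ j < q := Nat.pow_lt_pow_right hp.one_lt (by omega)
    rw [hzdef, hD.2.2 (p ^ j) hpj (y ^ q) x]
    apply Finset.sum_eq_zero
    rintro ⟨a, b⟩ hab
    rw [Finset.HasAntidiagonal.mem_antidiagonal] at hab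
    rcases Nat.eq_zero_or_pos a with rfl | ha
    · have hb : b = p ^ j := by omega
      rw [hD.2.1, hb, hxp j hj1 hj2, mul_zero]
    · rw [hDyq a ha (by omega), zero_mul]
  -- commutation
  have hcomm_iter : ∀ a, a < p ^ m → ∀ t (w : R), D a ((D q)^[t] w) = (D q)^[t] (D a w) := by
    intro a ha t
    induction t with
    | zero => intro w; simp
    | succ t IH =>
      intro w
      rw [Function.iterate_succ_apply', Function.iterate_succ_apply',
        hs_comm hiter ha hqN, IH]
  have hsub : ∀ n, n < p ^ m → ∀ a b : R, D n (a - b) = D n a - D n b := fun n hn a b =>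
    map_sub (hsHom hD n hn) a b
  have hzero_iter : ∀ t, (D q)^[t] (0 : R) = 0 := by
    intro t
    induction t with
    | zero => simp
    | succ t IH => rw [Function.iterate_succ_apply', IH, hs_zero hD hqN]
  constructor
  · rw [hsub 1 hN1, hcomm_iter 1 hN1 (p - 1) z, hz1]
  · intro j hj1 hj2
    rcases lt_or_eq_of_le hj2 with hji | hji
    · have hji' : j ≤ i := by omega
      have hpj : p ^ j < p ^ m := lt_of_le_of_lt
        (Nat.pow_le_pow_right hp.pos (by omega)) hqN
      rw [hsub (p ^ j) hpj, hcomm_iter (p ^ j) hpj (p - 1) z, hzp j hj1 hji',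
        hzero_iter, sub_zero]
    · subst hji
      rw [hsub q hqN]
      have hstep : (D q)^[p] z = D q ((D q)^[p - 1] z) := by
        conv_lhs => rw [show p = (p - 1) + 1 by omega]
        rw [Function.iterate_succ_apply']
      rw [← hstep]
      have h1 := hs_iterate hp hD hiter hi2 z 1 le_rfl (by omega)
      have hpth := hs_iterate hp hD hiter hi2 z p (by omega) le_rfl
      have heq : (D q)^[p] z = (D q)^[1] z := by
        rw [h1, hpth]
        apply Finset.sum_congr rfl
        intro k hk
        rw [Finset.mem_range] at hk
        rw [nsmul_eq_mul, nsmul_eq_mul]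
        congr 1
        apply cast_eq_of_zmod (p := p)
        rcases Nat.eq_zero_or_pos k with rfl | hk1
        · rw [gmA_zero_right (by omega), gmA_zero_right (by omega)]
        · rw [gmA_card hp k hk1 (by omega), gmA_one k]
          split <;> simp
      rw [heq, Function.iterate_one, sub_self]
end
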